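/- Let φ, V : [0,∞) → [0,∞) be nondecreasing, positive on (0,∞), with φ(0)=V(0)=0 and φ(r) → ∞. Assume V ∈ WLSC(A, C) (V(R)/V(r) ≥ C(R/r)^A for 0<r≤R) and φ ∈ WUSC(ᾱ, c̄) with A/ᾱ > 1. Fix 0 < β < A/ᾱ - 1 and r > 0. Then ∫_{φ(r)}^∞ t^β / V(φ⁻¹(t)) dt ≤ (c̄^{A/ᾱ} / (C (A/ᾱ - 1 - β))) · φ(r)^{β+1} / V(r), where φ⁻¹ is the generalized inverse of φ. -/

import Mathlib

open MeasureTheory ENNReal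

/-- Under weak lower scaling `WLSC(A,C)` for the volume function `V` and weak upper scaling
`WUSC(ᾱ,c̄)` for `φ` with `A/ᾱ > 1`, for `0 < β < A/ᾱ - 1` and `r > 0`:
`∫_{φ(r)}^∞ t^β / V(φ⁻¹(t)) dt ≤ (c̄^{A/ᾱ}/(C(A/ᾱ-1-β))) φ(r)^{β+1}/V(r)`. -/
theorem tail_integral_bound
    (φ V : ℝ → ℝ)
    (hφmono : MonotoneOn φ (Set.Ici 0)) (hVmono : MonotoneOn V (Set.Ici 0))
    (hφ0 : φ 0 = 0) (hV0 : V 0 = 0)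
    (hφpos : ∀ x > (0:ℝ), 0 < φ x) (hVpos : ∀ x > (0:ℝ), 0 < V x)
    (hφtop : Filter.Tendsto φ Filter.atTop Filter.atTop)
    (A C : ℝ) (hA : 0 < A) (hC0 : 0 < C) (hC1 : C ≤ 1)
    (hVscale : ∀ l ≥ (1:ℝ), ∀ θ > (0:ℝ), C * l ^ A * V θ ≤ V (l * θ))
    (a c : ℝ) (ha : 0 < a) (hc : 1 ≤ c)
    (hφscale : ∀ l ≥ (1:ℝ), ∀ θ > (0:ℝ), φ (l * θ) ≤ c * l ^ a * φ θ)
    (hAa : 1 < A / a)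
    (β : ℝ) (hβ0 : 0 < β) (hβ : β < A / a - 1)
    (r : ℝ) (hr : 0 < r)
    (φinv : ℝ → ℝ) (hφinv : ∀ u, φinv u = sInf {s : ℝ | 0 < s ∧ u < φ s}) :
    (∫⁻ t in Set.Ioi (φ r), ENNReal.ofReal (t ^ β / V (φinv t)))
      ≤ ENNReal.ofReal (c ^ (A/a) / (C * (A/a - 1 - β)) * (φ r ^ (β+1) / V r)) := by
  have hc0 : (0:ℝ) < c := lt_of_lt_of_le one_pos hc
  set p := A / a with hpdef
  have hp1 : 1 < p := hAa
  have hs : 0 < φ r := hφpos r hr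
  have hVr : 0 < V r := hVpos r hr
  set s := φ r with hsdef
  have hcp : (0:ℝ) < c ^ p := Real.rpow_pos_of_pos hc0 p
  have hsp : (0:ℝ) < s ^ p := Real.rpow_pos_of_pos hs p
  set M := c ^ p * s ^ p / (C * V r) with hM
  have hMpos : 0 < M := by positivity
  -- pointwise bound on the integrand
  have key : ∀ t ∈ Set.Ioi s, t ^ β / V (φinv t) ≤ M * t ^ (β - p) := by
    intro t ht
    simp only [Set.mem_Ioi] at ht
    have ht0 : 0 < t := hs.trans ht
    have hSsub : {x : ℝ | 0 < x ∧ t < φ x} ⊆ Set.Ioi r := by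
      intro x hx
      simp only [Set.mem_setOf_eq] at hx
      by_contra hxr
      simp only [Set.mem_Ioi, not_lt] at hxr
      have : φ x ≤ φ r := hφmono hx.1.le hr.le hxr
      have : t < s := hx.2.trans_le this
      linarith
    have hSne : {x : ℝ | 0 < x ∧ t < φ x}.Nonempty := by
      obtain ⟨x, hx1, hx2⟩ :=
        ((Filter.tendsto_atTop.mp hφtop (t + 1)).and (Filter.eventually_gt_atTop 0)).exists
      exact ⟨x, hx2, by linarith⟩
    have hinv_ge_r : r ≤ φinv t := by
      rw [hφinv t]
      exact le_csInf hSne fun x hx => (hSsub hx).le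
    have hinv0 : (0:ℝ) ≤ φinv t := hr.le.trans hinv_ge_r
    have hVφ_ge : V r ≤ V (φinv t) := hVmono hr.le hinv0 hinv_ge_r
    have hVφpos : 0 < V (φinv t) := hVr.trans_le hVφ_ge
    -- key lower bound on V (φinv t)
    have key2 : C * t ^ p * V r / (c ^ p * s ^ p) ≤ V (φinv t) := by
      by_cases htc : t ≤ c * s
      · -- small t : use t^p ≤ (c s)^p and C ≤ 1
        have h1 : t ^ p ≤ (c * s) ^ p :=
          Real.rpow_le_rpow ht0.le htc (le_of_lt (lt_trans one_pos hp1))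
        have h2 : (c * s) ^ p = c ^ p * s ^ p := Real.mul_rpow hc0.le hs.le
        calc C * t ^ p * V r / (c ^ p * s ^ p)
            ≤ 1 * (c ^ p * s ^ p) * V r / (c ^ p * s ^ p) := by
              apply div_le_div_of_nonneg_right _ (by positivity)
              have : C * t ^ p ≤ 1 * (c ^ p * s ^ p) := by
                rw [one_mul, ← h2]
                calc C * t ^ p ≤ 1 * t ^ p := by nlinarith [Real.rpow_pos_of_pos ht0 p]
                  _ = t ^ p := one_mul _
                  _ ≤ (c * s) ^ p := h1
              nlinarith
          _ = V r := by field_simp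
          _ ≤ V (φinv t) := hVφ_ge
      · -- large t : use the scaling of φ to push φinv t up, then scaling of V
        push_neg at htc
        have hq1 : (1:ℝ) ≤ t / (c * s) := by
          rw [le_div_iff₀ (by positivity)]
          linarith
        set lam := (t / (c * s)) ^ (1 / a) with hlam
        have hlam1 : (1:ℝ) ≤ lam := Real.one_le_rpow hq1 (by positivity)
        have hlam0 : (0:ℝ) < lam := lt_of_lt_of_le one_pos hlam1
        have hinv_ge : lam * r ≤ φinv t := by
          rw [hφinv t]
          apply le_csInf hSne
          intro x hx
          simp only [Set.mem_setOf_eq] at hx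
          have hxr : r < x := hSsub hx
          have hx0 : 0 < x := hx.1
          have hratio : (1:ℝ) ≤ x / r := by
            rw [le_div_iff₀ hr]; linarith
          have hscale := hφscale (x / r) hratio r hr
          rw [div_mul_cancel₀ _ hr.ne'] at hscale
          have h3 : t < c * (x / r) ^ a * s := lt_of_lt_of_le hx.2 hscale
          have h4 : t / (c * s) < (x / r) ^ a := by
            rw [div_lt_iff₀ (by positivity)]
            nlinarith
          have hxr0 : 0 < x / r := by positivity
          have h5 : lam ≤ x / r := by
            have h6 : ((x / r) ^ a) ^ (1 / a) = x / r := by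
              rw [← Real.rpow_mul hxr0.le, mul_one_div, div_self ha.ne', Real.rpow_one]
            calc lam = (t / (c * s)) ^ (1 / a) := hlam
              _ ≤ ((x / r) ^ a) ^ (1 / a) :=
                Real.rpow_le_rpow (by positivity) h4.le (by positivity)
              _ = x / r := h6
          calc lam * r ≤ (x / r) * r := mul_le_mul_of_nonneg_right h5 hr.le
            _ = x := div_mul_cancel₀ _ hr.ne'
        have hVlam : C * lam ^ A * V r ≤ V (lam * r) := hVscale lam hlam1 r hr
        have hVmono2 : V (lam * r) ≤ V (φinv t) :=
          hVmono (Set.mem_Ici.mpr (by positivity)) hinv0 hinv_ge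
        have hlamA : lam ^ A = t ^ p / (c ^ p * s ^ p) := by
          rw [hlam, ← Real.rpow_mul (by positivity), one_div_mul_eq_div,
            Real.div_rpow ht0.le (by positivity), Real.mul_rpow hc0.le hs.le]
        calc C * t ^ p * V r / (c ^ p * s ^ p)
            = C * lam ^ A * V r := by rw [hlamA]; ring
          _ ≤ V (lam * r) := hVlam
          _ ≤ V (φinv t) := hVmono2
    -- derive the pointwise inequality from key2
    have hden : 0 < C * t ^ p * V r / (c ^ p * s ^ p) := by positivity
    have h7 : t ^ β / V (φinv t) ≤ t ^ β / (C * t ^ p * V r / (c ^ p * s ^ p)) :=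
      div_le_div_of_nonneg_left (Real.rpow_nonneg ht0.le β) hden key2
    refine h7.trans_eq ?_
    rw [Real.rpow_sub ht0]
    rw [hM]
    field_simp
  -- bound the integral
  calc (∫⁻ t in Set.Ioi s, ENNReal.ofReal (t ^ β / V (φinv t)))
      ≤ ∫⁻ t in Set.Ioi s, ENNReal.ofReal (M * t ^ (β - p)) := by
        apply setLIntegral_mono (by fun_prop)
        intro x hx
        exact ENNReal.ofReal_le_ofReal (key x hx)
    _ = ENNReal.ofReal M * ∫⁻ t in Set.Ioi s, ENNReal.ofReal (t ^ (β - p)) := by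
        rw [← lintegral_const_mul' _ _ ENNReal.ofReal_ne_top]
        congr 1 with t
        rw [ENNReal.ofReal_mul hMpos.le]
    _ = ENNReal.ofReal M * ENNReal.ofReal (∫ t in Set.Ioi s, t ^ (β - p)) := by
        congr 1
        rw [← ofReal_integral_eq_lintegral_ofReal
          (integrableOn_Ioi_rpow_of_lt (by linarith) hs)]
        filter_upwards [ae_restrict_mem measurableSet_Ioi] with t ht
        exact Real.rpow_nonneg (hs.trans ht).le _
    _ = ENNReal.ofReal (M * (s ^ (β - p + 1) / (p - 1 - β))) := by
        rw [integral_Ioi_rpow_of_lt (by linarith) hs, ← ENNReal.ofReal_mul hMpos.le]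
        congr 1
        rw [neg_div, ← div_neg]
        ring_nf
    _ ≤ ENNReal.ofReal (c ^ (A/a) / (C * (A/a - 1 - β)) * (φ r ^ (β+1) / V r)) := by
        apply ENNReal.ofReal_le_ofReal
        rw [hM, ← hpdef, ← hsdef]
        have hspow : s ^ p * s ^ (β - p + 1) = s ^ (β + 1) := by
          rw [← Real.rpow_add hs]; ring_nf
        have hpb : 0 < p - 1 - β := by linarith
        apply le_of_eq
        rw [← hspow]
        have h1 : C ≠ 0 := hC0.ne'
        have h2 : V r ≠ 0 := hVr.ne'
        have h3 : p - 1 - β ≠ 0 := hpb.ne'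
        field_simp
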